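/- Define C_N(m,n) = binom(n,m)/binom(N-1,m) for 0 ≤ m,n ≤ N-1. Then for 0 ≤ m ≤ m' < N and 0 < n < N, ∑_{a=m+1}^{m'} C_N(a,n)·(1/n) = (C_N(m,n-1) − C_N(m',n-1))·(1/(N-n)). -/

import Mathlib

/-- `C_N(m,n) = binom(n,m)/binom(N-1,m)` as a rational number. -/
def Ccoef (N m n : ℕ) : ℚ := (n.choose m : ℚ) / ((N - 1).choose m : ℚ)

lemma Ccoef_key (N n b : ℕ) (hb : b + 1 ≤ N - 1) (hn : 0 < n) (hnN : n < N) :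
    Ccoef N (b + 1) n * (1 / (n : ℚ)) =
      (Ccoef N b (n - 1) - Ccoef N (b + 1) (n - 1)) * (1 / ((N : ℚ) - (n : ℚ))) := by
  have hbN : b ≤ N - 1 := le_trans (Nat.le_succ b) hb
  have hD1 : ((N - 1).choose b : ℚ) ≠ 0 :=
    Nat.cast_ne_zero.mpr (Nat.choose_pos hbN).ne'
  have hD2 : ((N - 1).choose (b + 1) : ℚ) ≠ 0 :=
    Nat.cast_ne_zero.mpr (Nat.choose_pos hb).ne'
  have hnq : (n : ℚ) ≠ 0 := Nat.cast_ne_zero.mpr hn.ne'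
  have hNn : (N : ℚ) - (n : ℚ) ≠ 0 := by
    have : (n : ℚ) < N := by exact_mod_cast hnN
    linarith
  set A : ℚ := (n.choose (b + 1) : ℚ)
  set B : ℚ := ((N - 1).choose (b + 1) : ℚ)
  set C : ℚ := ((n - 1).choose b : ℚ)
  set D : ℚ := ((N - 1).choose b : ℚ)
  set E : ℚ := ((n - 1).choose (b + 1) : ℚ)
  have h1 : (n : ℚ) * C = A * ((b : ℚ) + 1) := by
    have h := Nat.add_one_mul_choose_eq (n - 1) b
    rw [Nat.sub_add_cancel hn] at h
    simp only [A, C]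
    exact_mod_cast h
  have h2 : B * ((b : ℚ) + 1) = D * ((N : ℚ) - 1 - b) := by
    have h := Nat.choose_succ_right_eq (N - 1) b
    have h1N : 1 ≤ N := le_trans hn hnN.le
    have hsub : ((N - 1 - b : ℕ) : ℚ) = (N : ℚ) - 1 - b := by
      rw [Nat.cast_sub hbN, Nat.cast_sub h1N]; push_cast; ring
    have : B * ((b : ℚ) + 1) = D * ((N - 1 - b : ℕ) : ℚ) := by
      simp only [B, D]; exact_mod_cast h
    rw [this, hsub]
  have h3 : A = C + E := by
    have h := Nat.choose_succ_succ (n - 1) b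
    simp only [A, C, E]
    rw [show n = (n - 1) + 1 from (Nat.succ_pred_eq_of_pos hn).symm]
    exact_mod_cast h
  have E0 : ((N : ℚ) - n) * A * D + (n : ℚ) * E * D = (n : ℚ) * C * B := by
    linear_combination (-(D + B)) * h1 + (-A) * h2 + (-(n : ℚ) * D) * h3
  unfold Ccoef
  rw [div_mul_div_comm, div_sub_div _ _ hD1 hD2, div_mul_div_comm,
    div_eq_div_iff (by positivity) (mul_ne_zero (mul_ne_zero hD1 hD2) hNn)]
  linear_combination B * E0

/-- Lemma 3.6 (2): for `0 ≤ m ≤ m' < N` and `0 < n < N`,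
`∑_{a=m+1}^{m'} C_N(a,n)·(1/n) = (C_N(m,n-1) − C_N(m',n-1))·(1/(N-n))`. -/
theorem sum_Ccoef_eq_diff (N m m' n : ℕ) (hm : m ≤ m') (hm' : m' < N)
    (hn : 0 < n) (hnN : n < N) :
    ∑ a ∈ Finset.Icc (m + 1) m', Ccoef N a n * (1 / (n : ℚ)) =
      (Ccoef N m (n - 1) - Ccoef N m' (n - 1)) * (1 / ((N : ℚ) - (n : ℚ))) := by
  induction m' with
  | zero =>
      interval_cases m
      simp
  | succ k ih =>
      rcases Nat.eq_or_lt_of_le hm with h | h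
      · rw [← h]
        simp [Finset.Icc_eq_empty_of_lt (Nat.lt_succ_self m)]
      · have hmk : m ≤ k := Nat.lt_succ_iff.mp h
        have hkN : k < N := Nat.lt_of_succ_lt hm'
        rw [Finset.sum_Icc_succ_top (Nat.succ_le_succ hmk), ih hmk hkN,
          Ccoef_key N n k (by omega) hn hnN]
        ring
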